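/- With μ, h, k, s(r,t) as above, if r ≥ λ₂(μ) where λ₂(μ)² = ∫ u² dμ(u) < ∞, then lim_{t→0⁺} s(r,t)·t = r² − λ₂(μ)². -/

import Mathlib

open MeasureTheory Set Filter

/-- `h μ s = ∫ s/(s² + u²) dμ(u)`. -/
noncomputable def hfun (μ : MeasureTheory.Measure ℝ) (s : ℝ) : ℝ :=
  ∫ u, s / (s ^ 2 + u ^ 2) ∂μ

/-- `k(s,t) = (s−t)(1/h(s) − s + t)`. -/
noncomputable def kfun (μ : MeasureTheory.Measure ℝ) (s t : ℝ) : ℝ :=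
  (s - t) * (1 / hfun μ s - s + t)

section aux

variable (μ : MeasureTheory.Measure ℝ) [IsProbabilityMeasure μ]

lemma cont_core (s : ℝ) (hs : 0 < s) : Continuous (fun u : ℝ => s / (s ^ 2 + u ^ 2)) :=
  continuous_const.div (by continuity) (fun u => by positivity)

lemma int_core (s : ℝ) (hs : 0 < s) : Integrable (fun u : ℝ => s / (s ^ 2 + u ^ 2)) μ := by
  refine (integrable_const (1 / s)).mono' ((cont_core s hs).aestronglyMeasurable) ?_
  filter_upwards with u
  rw [Real.norm_eq_abs, abs_of_nonneg (by positivity), div_le_div_iff₀ (by positivity) hs]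
  nlinarith [sq_nonneg u]

lemma int_frac (s : ℝ) (hs : 0 < s) : Integrable (fun u : ℝ => u ^ 2 / (s ^ 2 + u ^ 2)) μ := by
  have hc : Continuous (fun u : ℝ => u ^ 2 / (s ^ 2 + u ^ 2)) :=
    (continuous_pow 2).div (by continuity) (fun u => by positivity)
  refine (integrable_const (1 : ℝ)).mono' hc.aestronglyMeasurable ?_
  filter_upwards with u
  rw [Real.norm_eq_abs, abs_of_nonneg (by positivity), div_le_one (by positivity)]
  nlinarith [sq_nonneg s]

lemma hfun_upper (s : ℝ) (hs : 0 < s) : hfun μ s ≤ 1 / s := by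
  have := integral_mono (int_core μ s hs) (integrable_const (1 / s))
    (fun u => by rw [div_le_div_iff₀ (by positivity) hs]; nlinarith [sq_nonneg u])
  simpa [hfun] using this

lemma one_sub_hfun (s : ℝ) (hs : 0 < s) :
    1 - s * hfun μ s = ∫ u, u ^ 2 / (s ^ 2 + u ^ 2) ∂μ := by
  have key : ∀ u : ℝ, u ^ 2 / (s ^ 2 + u ^ 2) = 1 - s * (s / (s ^ 2 + u ^ 2)) := by
    intro u
    have h1 : s ^ 2 + u ^ 2 ≠ 0 := by positivity
    field_simp
    ring
  rw [integral_congr_ae (Filter.Eventually.of_forall key),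
    integral_sub (integrable_const 1) ((int_core μ s hs).const_mul s),
    integral_const_mul]
  simp [hfun]

lemma hfun_lower (s : ℝ) (hs : 0 < s) (hint : Integrable (fun u : ℝ => u ^ 2) μ) :
    s / (s ^ 2 + (∫ u, u ^ 2 ∂μ)) ≤ hfun μ s := by
  set L := ∫ u, u ^ 2 ∂μ with hLdef
  have hL0 : 0 ≤ L := integral_nonneg fun u => sq_nonneg u
  set b := s ^ 2 + L with hb
  have hbpos : 0 < b := by positivity
  have hint2 : Integrable (fun u : ℝ => s * (s ^ 2 + 2 * L - u ^ 2) / b ^ 2) μ := by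
    have : (fun u : ℝ => s * (s ^ 2 + 2 * L - u ^ 2) / b ^ 2)
        = fun u : ℝ => s * (s ^ 2 + 2 * L) / b ^ 2 - s / b ^ 2 * u ^ 2 := by
      funext u; ring
    rw [this]
    exact (integrable_const _).sub (hint.const_mul _)
  have hpt : ∀ u : ℝ, s * (s ^ 2 + 2 * L - u ^ 2) / b ^ 2 ≤ s / (s ^ 2 + u ^ 2) := by
    intro u
    have h1 : (0:ℝ) < s ^ 2 + u ^ 2 := by positivity
    have h2L : s * (s ^ 2 + 2 * L - u ^ 2) = s * (2 * b - (s ^ 2 + u ^ 2)) := by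
      rw [hb]; ring
    rw [div_le_div_iff₀ (by positivity) h1, h2L]
    nlinarith [mul_nonneg hs.le (sq_nonneg ((s ^ 2 + u ^ 2) - b))]
  have hmono := integral_mono hint2 (int_core μ s hs) hpt
  have hcalc : (∫ u, s * (s ^ 2 + 2 * L - u ^ 2) / b ^ 2 ∂μ) = s / b := by
    have : (fun u : ℝ => s * (s ^ 2 + 2 * L - u ^ 2) / b ^ 2)
        = fun u : ℝ => s * (s ^ 2 + 2 * L) / b ^ 2 - s / b ^ 2 * u ^ 2 := by
      funext u; ring
    rw [this, integral_sub (integrable_const _) (hint.const_mul _), integral_const_mul,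
      integral_const]
    simp only [probReal_univ, smul_eq_mul, one_mul, ← hLdef]
    rw [hb]
    have hb2 : (s ^ 2 + L) ≠ 0 := by positivity
    field_simp
    ring
  rw [hcalc] at hmono
  exact hmono

lemma hfun_pos (s : ℝ) (hs : 0 < s) (hint : Integrable (fun u : ℝ => u ^ 2) μ) :
    0 < hfun μ s := by
  have hL0 : 0 ≤ ∫ u, u ^ 2 ∂μ := integral_nonneg fun u => sq_nonneg u
  exact lt_of_lt_of_le (by positivity) (hfun_lower μ s hs hint)

lemma inv_hfun_le (s : ℝ) (hs : 0 < s) (hint : Integrable (fun u : ℝ => u ^ 2) μ) :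
    1 / hfun μ s ≤ (s ^ 2 + (∫ u, u ^ 2 ∂μ)) / s := by
  have hL0 : 0 ≤ ∫ u, u ^ 2 ∂μ := integral_nonneg fun u => sq_nonneg u
  have h1 : (0:ℝ) < s / (s ^ 2 + (∫ u, u ^ 2 ∂μ)) := by positivity
  have := one_div_le_one_div_of_le h1 (hfun_lower μ s hs hint)
  rwa [one_div_div] at this

lemma s_le_inv_hfun (s : ℝ) (hs : 0 < s) (hint : Integrable (fun u : ℝ => u ^ 2) μ) :
    s ≤ 1 / hfun μ s := by
  have := one_div_le_one_div_of_le (hfun_pos μ s hs hint) (hfun_upper μ s hs)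
  rwa [one_div_one_div] at this

lemma psi_le (s : ℝ) (hs : 0 < s) (hint : Integrable (fun u : ℝ => u ^ 2) μ) :
    (∫ u, s ^ 2 * u ^ 2 / (s ^ 2 + u ^ 2) ∂μ) ≤ s * (1 / hfun μ s - s) := by
  have hpos := hfun_pos μ s hs hint
  have hne : hfun μ s ≠ 0 := ne_of_gt hpos
  have hI : (∫ u, s ^ 2 * u ^ 2 / (s ^ 2 + u ^ 2) ∂μ) = s ^ 2 * (1 - s * hfun μ s) := by
    rw [one_sub_hfun μ s hs, ← integral_const_mul]
    congr 1
    funext u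
    ring
  rw [hI]
  have e : s * (1 / hfun μ s - s) - s ^ 2 * (1 - s * hfun μ s)
      = s * ((1 / hfun μ s) * (1 - s * hfun μ s) ^ 2) := by
    field_simp
  nlinarith [mul_nonneg hs.le (mul_nonneg (le_of_lt (one_div_pos.2 hpos)) (sq_nonneg (1 - s * hfun μ s)))]

lemma psi_tendsto (hint : Integrable (fun u : ℝ => u ^ 2) μ) :
    Tendsto (fun s : ℝ => ∫ u, s ^ 2 * u ^ 2 / (s ^ 2 + u ^ 2) ∂μ) atTop
      (nhds (∫ u, u ^ 2 ∂μ)) := by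
  refine tendsto_integral_filter_of_dominated_convergence (fun u => u ^ 2) ?_ ?_ hint ?_
  · filter_upwards [eventually_ge_atTop (1:ℝ)] with s hs1
    have hs : (0:ℝ) < s := lt_of_lt_of_le one_pos hs1
    exact (((continuous_const.mul (continuous_pow 2)).div (by continuity)
      (fun u => by positivity)).aestronglyMeasurable)
  · filter_upwards [eventually_ge_atTop (1:ℝ)] with s hs1
    have hs : (0:ℝ) < s := lt_of_lt_of_le one_pos hs1
    filter_upwards with u
    rw [Real.norm_eq_abs, abs_of_nonneg (by positivity), div_le_iff₀ (by positivity)]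
    nlinarith [sq_nonneg u, sq_nonneg s]
  · filter_upwards with u
    have hmain : Tendsto (fun s : ℝ => u ^ 4 / (s ^ 2 + u ^ 2)) atTop (nhds 0) := by
      have t1 : Tendsto (fun s : ℝ => s ^ 2 + u ^ 2) atTop atTop :=
        (tendsto_pow_atTop two_ne_zero).atTop_add tendsto_const_nhds
      exact tendsto_const_nhds.div_atTop t1
    have t2 : Tendsto (fun s : ℝ => u ^ 2 - u ^ 4 / (s ^ 2 + u ^ 2)) atTop (nhds (u ^ 2)) := by
      have := Filter.Tendsto.sub (tendsto_const_nhds (α := ℝ) (x := u ^ 2) (f := atTop)) hmain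
      rw [sub_zero] at this
      exact this
    refine t2.congr' ?_
    filter_upwards [eventually_ge_atTop (1:ℝ)] with s hs1
    have hs : (0:ℝ) < s := lt_of_lt_of_le one_pos hs1
    have hne : s ^ 2 + u ^ 2 ≠ 0 := by positivity
    rw [eq_div_iff hne, sub_mul, div_mul_cancel₀ _ hne]
    ring

end aux

/-- Let `s(r,t)` be the solution in `(t,∞)` of `k(s,t) = r²`. If `r ≥ λ₂(μ)` where
`λ₂(μ)² = ∫ u² dμ < ∞`, then `s(r,t)·t → r² − λ₂(μ)²` as `t → 0⁺`. -/
theorem stmt7 (μ : MeasureTheory.Measure ℝ) [IsProbabilityMeasure μ]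
    (hsym : μ.map (fun u => -u) = μ)
    (hnd : ∀ c : ℝ, μ ≠ MeasureTheory.Measure.dirac c)
    (hint : Integrable (fun u : ℝ => u ^ 2) μ)
    (r : ℝ) (hr : 0 < r) (hrge : (∫ u, u ^ 2 ∂μ) ≤ r ^ 2)
    (s : ℝ → ℝ)
    (hs : ∀ t : ℝ, 0 < t → s t ∈ Ioi t ∧ kfun μ (s t) t = r ^ 2) :
    Tendsto (fun t => s t * t) (nhdsWithin 0 (Ioi 0))
      (nhds (r ^ 2 - ∫ u, u ^ 2 ∂μ)) := by
  set L := ∫ u, u ^ 2 ∂μ with hLdef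
  have hL0 : 0 ≤ L := integral_nonneg fun u => sq_nonneg u
  -- basic facts for each t > 0
  have basics : ∀ t : ℝ, 0 < t →
      0 < s t ∧ 0 ≤ (1 / hfun μ (s t) - s t) ∧
        s t * (1 / hfun μ (s t) - s t) ≤ L ∧
        s t * t = r ^ 2 - s t * (1 / hfun μ (s t) - s t)
          + t * (1 / hfun μ (s t) - s t) + t ^ 2 := by
    intro t ht
    obtain ⟨hmem, hk⟩ := hs t ht
    have hσt : t < s t := hmem
    have hσ0 : 0 < s t := ht.trans hσt
    have hg0 : 0 ≤ 1 / hfun μ (s t) - s t :=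
      sub_nonneg.2 (s_le_inv_hfun μ (s t) hσ0 hint)
    have hGL : s t * (1 / hfun μ (s t) - s t) ≤ L := by
      have h6 : 1 / hfun μ (s t) ≤ ((s t) ^ 2 + L) / s t := inv_hfun_le μ (s t) hσ0 hint
      have e : ((s t) ^ 2 + L) / s t - s t = L / s t := by
        field_simp
        ring
      have h7 : 1 / hfun μ (s t) - s t ≤ L / s t := by linarith [e ▸ sub_le_sub_right h6 (s t)]
      calc s t * (1 / hfun μ (s t) - s t) ≤ s t * (L / s t) :=
            mul_le_mul_of_nonneg_left h7 hσ0.le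
        _ = L := by field_simp
    refine ⟨hσ0, hg0, hGL, ?_⟩
    have hk' : (s t - t) * (1 / hfun μ (s t) - s t + t) = r ^ 2 := by
      simpa [kfun] using hk
    linear_combination hk'
  -- G tends to L
  have hGtendsto : Tendsto (fun t => s t * (1 / hfun μ (s t) - s t))
      (nhdsWithin 0 (Ioi 0)) (nhds L) := by
    rw [tendsto_order]
    constructor
    · intro a ha
      obtain ⟨M, hM⟩ := (eventually_atTop.1
        ((psi_tendsto μ hint).eventually (eventually_gt_nhds ha)))
      set M' : ℝ := max M 1 with hM'def
      have hM'pos : (0:ℝ) < M' := lt_of_lt_of_le one_pos (le_max_right _ _)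
      have hδ : 0 < (L - a) / M' := div_pos (by linarith) hM'pos
      filter_upwards [Ioo_mem_nhdsGT hδ] with t htIoo
      have ht : 0 < t := htIoo.1
      obtain ⟨hσ0, hg0, hGL, hid⟩ := basics t ht
      by_cases hcase : M' ≤ s t
      · have h1 : a < ∫ u, (s t) ^ 2 * u ^ 2 / ((s t) ^ 2 + u ^ 2) ∂μ :=
          hM (s t) (le_trans (le_max_left _ _) hcase)
        exact lt_of_lt_of_le h1 (psi_le μ (s t) hσ0 hint)
      · push_neg at hcase
        have h1 : s t * t ≤ M' * t := mul_le_mul_of_nonneg_right hcase.le ht.le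
        have h2 : M' * t < L - a := by
          have := htIoo.2
          calc M' * t = t * M' := mul_comm _ _
            _ < (L - a) / M' * M' := by
                exact mul_lt_mul_of_pos_right this hM'pos
            _ = L - a := by field_simp
        have h3 : 0 ≤ t * (1 / hfun μ (s t) - s t) := mul_nonneg ht.le hg0
        nlinarith [sq_nonneg t]
    · intro b hb
      filter_upwards [self_mem_nhdsWithin] with t ht
      have ht : (0:ℝ) < t := ht
      exact lt_of_le_of_lt (basics t ht).2.2.1 hb
  -- limits of the elementary pieces
  have ht0 : Tendsto (fun t : ℝ => t) (nhdsWithin 0 (Ioi 0)) (nhds 0) :=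
    Filter.tendsto_id.mono_left nhdsWithin_le_nhds
  -- squeeze
  have hupperlim : Tendsto
      (fun t => r ^ 2 - s t * (1 / hfun μ (s t) - s t) + t * Real.sqrt L + t ^ 2)
      (nhdsWithin 0 (Ioi 0)) (nhds (r ^ 2 - L)) := by
    have h1 := ((tendsto_const_nhds (α := ℝ) (x := r ^ 2)
        (f := nhdsWithin 0 (Ioi 0))).sub hGtendsto).add
      ((ht0.mul_const (Real.sqrt L)).add (ht0.pow 2))
    simp only [zero_mul, add_zero, zero_pow, ne_eq, OfNat.ofNat_ne_zero,
      not_false_eq_true] at h1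
    convert h1 using 2 <;> ring
  refine tendsto_of_tendsto_of_tendsto_of_le_of_le'
    (tendsto_const_nhds (α := ℝ) (x := r ^ 2 - L) (f := nhdsWithin 0 (Ioi 0)))
    hupperlim ?_ ?_
  · filter_upwards [self_mem_nhdsWithin] with t ht
    have ht : (0:ℝ) < t := ht
    obtain ⟨hσ0, hg0, hGL, hid⟩ := basics t ht
    have h3 : 0 ≤ t * (1 / hfun μ (s t) - s t) := mul_nonneg ht.le hg0
    nlinarith [sq_nonneg t]
  · filter_upwards [self_mem_nhdsWithin] with t ht
    have ht : (0:ℝ) < t := ht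
    obtain ⟨hσ0, hg0, hGL, hid⟩ := basics t ht
    -- g t ≤ sqrt L
    have hgs : 1 / hfun μ (s t) - s t ≤ s t := by
      have h4 : t * (1 / hfun μ (s t) - s t) ≤ t * s t := by nlinarith [sq_nonneg t]
      exact le_of_mul_le_mul_left h4 ht
    have hgsq : (1 / hfun μ (s t) - s t) ^ 2 ≤ L := by nlinarith
    have hgsqrt : 1 / hfun μ (s t) - s t ≤ Real.sqrt L := by
      rw [← Real.sqrt_sq hg0]
      exact Real.sqrt_le_sqrt hgsq
    have h5 : t * (1 / hfun μ (s t) - s t) ≤ t * Real.sqrt L :=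
      mul_le_mul_of_nonneg_left hgsqrt ht.le
    linarith
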